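/- arXiv:1306.6321 — 2 statements merged into one kernel-verified Lean document; each statement's English description precedes it below -/
import Mathlib

section
/- Exact corrected information ratio for real weak values with Gaussian meter never exceeds one: for all θ_i, θ_f ∈ ℝ and G > 0, the quantity R = (1/2)[1 + cosθ_f cosθ_i − e^{−G/2} sinθ_f sinθ_i + G(1 + cosθ_f cosθ_i)/(1 + e^{G/2} cosec θ_f cosec θ_i (1 + cosθ_f cosθ_i))] satisfies R ≤ 1 (on the domain where sinθ_i sinθ_f > 0 so the expression is defined). -/
open Real

/-- The exact corrected Fisher-information ratio for real weak values with a
Gaussian meter never exceeds one, for any pre- and postselection angles and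
any measurement strength `G > 0` (on the domain where `sin θi · sin θf > 0`). -/
theorem real_wva_ratio_le_one (θi θf G : ℝ) (hG : 0 < G)
    (hs : 0 < sin θi * sin θf) :
    (1/2) * (1 + cos θf * cos θi
        - exp (-(G/2)) * sin θf * sin θi
        + G * (1 + cos θf * cos θi) /
          (1 + exp (G/2) * (1 / sin θf) * (1 / sin θi)
            * (1 + cos θf * cos θi))) ≤ 1 := by
  set s : ℝ := sin θf * sin θi with hsdef
  have hs' : 0 < s := by rw [hsdef, mul_comm]; exact hs
  have hsf : sin θf ≠ 0 := by
    intro h; rw [hsdef, h, zero_mul] at hs'; exact lt_irrefl 0 hs'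
  have hsi : sin θi ≠ 0 := by
    intro h; rw [hsdef, h, mul_zero] at hs'; exact lt_irrefl 0 hs'
  set c : ℝ := cos θf * cos θi with hcdef
  set A : ℝ := 1 + c with hAdef
  have hA : 0 ≤ A := by
    have h1 := neg_one_le_cos θf
    have h2 := neg_one_le_cos θi
    have h3 := cos_le_one θf
    have h4 := cos_le_one θi
    nlinarith
  have hcs : c + s ≤ 1 := by
    have h := cos_le_one (θf - θi)
    rw [cos_sub] at h
    linarith
  set x : ℝ := exp (G/2) with hxdef
  have hx : 0 < x := exp_pos _
  set y : ℝ := exp (-(G/2)) with hydef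
  have hy : 0 < y := exp_pos _
  have hxy : x * y = 1 := by
    rw [hxdef, hydef, ← exp_add]; ring_nf; exact exp_zero
  have hxG : G - 1 ≤ x := by
    have h4 := add_one_le_exp (G/4)
    have h : x = exp (G/4) * exp (G/4) := by
      rw [hxdef, ← exp_add]; ring_nf
    nlinarith [exp_pos (G/4), sq_nonneg (G/4 - 1)]
  -- rewrite the denominator
  have hD : 1 + x * (1 / sin θf) * (1 / sin θi) * A = (s + x * A) / s := by
    field_simp
    rw [hsdef]; ring
  have hpos : 0 < s + x * A := by positivity
  rw [hD]
  have hfrac : G * A / ((s + x * A) / s) = G * A * s / (s + x * A) := by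
    rw [div_div_eq_mul_div]

  rw [hfrac]
  have key : G * A * s / (s + x * A) ≤ G * s * y := by
    rw [div_le_iff₀ hpos]
    nlinarith [mul_nonneg (mul_nonneg hG.le hs'.le) (mul_nonneg hy.le hs'.le),
      mul_nonneg (mul_nonneg hG.le hs'.le) hA]
  have hlast : A - y * s + G * s * y ≤ 2 := by
    have h1 : (G - 1) * y ≤ 1 := by
      calc (G - 1) * y ≤ x * y := by nlinarith
        _ = 1 := hxy
    nlinarith
  have : y * sin θf * sin θi = y * s := by rw [hsdef]; ring
  nlinarith [key, hlast]
end

section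
/- Cramér–Rao-type consequence of postselection: under the AAV approximation with a Gaussian meter, the corrected weak-value-amplification Fisher information satisfies q F_g[P_wva] = |⟨f|A|i⟩|²/Δ_x² ≤ λ*²/Δ_x² = F_g[P_std], where equality in the first step uses F_g[P(x − Re(A_w)g)] = Re(A_w)²/Δ_x² and q = |⟨f|i⟩|². -/
open MeasureTheory

local notation "⟪" x ", " y "⟫" => @inner ℂ _ _ x y

/-- The centered Gaussian density with standard deviation `Δ`. -/
noncomputable def gaussianPDF (Δ s : ℝ) : ℝ :=
  (1 / (Real.sqrt (2 * Real.pi) * Δ)) * Real.exp (-(s ^ 2) / (2 * Δ ^ 2))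

open Real in
lemma sq_moment_exp (b : ℝ) (hb : 0 < b) :
    ∫ x : ℝ, x ^ 2 * Real.exp (-b * x ^ 2) = Real.sqrt (π / b) / (2 * b) := by
  have hI2 : Integrable fun x : ℝ => x ^ 2 * Real.exp (-b * x ^ 2) := by
    have := integrable_rpow_mul_exp_neg_mul_sq hb (s := 2) (by norm_num)
    have heq : (fun x : ℝ => x ^ (2 : ℝ) * Real.exp (-b * x ^ 2))
        = fun x : ℝ => x ^ 2 * Real.exp (-b * x ^ 2) := by
      funext x
      rw [show (2 : ℝ) = ((2 : ℕ) : ℝ) by norm_num, Real.rpow_natCast]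
    rwa [heq] at this
  have hI1 : Integrable fun x : ℝ => x * Real.exp (-b * x ^ 2) := by
    have := integrable_rpow_mul_exp_neg_mul_sq hb (s := 1) (by norm_num)
    simpa [Real.rpow_one] using this
  have hI0 : Integrable fun x : ℝ => Real.exp (-b * x ^ 2) := integrable_exp_neg_mul_sq hb
  have hderiv : ∀ x : ℝ, HasDerivAt (fun x : ℝ => x * Real.exp (-b * x ^ 2))
      (Real.exp (-b * x ^ 2) - 2 * b * (x ^ 2 * Real.exp (-b * x ^ 2))) x := by
    intro x
    have h := ((hasDerivAt_pow 2 x).const_mul (-b)).exp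
    have h2 := (hasDerivAt_id x).mul h
    refine h2.congr_deriv ?_
    simp
    ring
  have hf' : Integrable fun x : ℝ =>
      Real.exp (-b * x ^ 2) - 2 * b * (x ^ 2 * Real.exp (-b * x ^ 2)) :=
    hI0.sub (hI2.const_mul _)
  have hzero := integral_eq_zero_of_hasDerivAt_of_integrable hderiv hf' hI1
  rw [integral_sub hI0 (hI2.const_mul _), integral_const_mul, integral_gaussian] at hzero
  have : 2 * b * ∫ x : ℝ, x ^ 2 * Real.exp (-b * x ^ 2) = Real.sqrt (π / b) := by linarith
  field_simp at this ⊢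
  linarith

open Real in
lemma key_moment (Δ : ℝ) (hΔ : 0 < Δ) : ∫ s, s ^ 2 * gaussianPDF Δ s = Δ ^ 2 := by
  have hb : 0 < (2 * Δ ^ 2)⁻¹ := by positivity
  have heq : (fun s : ℝ => s ^ 2 * gaussianPDF Δ s)
      = fun s : ℝ => (1 / (Real.sqrt (2 * Real.pi) * Δ)) *
        (s ^ 2 * Real.exp (-(2 * Δ ^ 2)⁻¹ * s ^ 2)) := by
    funext s
    unfold gaussianPDF
    rw [show -(2 * Δ ^ 2)⁻¹ * s ^ 2 = -(s ^ 2) / (2 * Δ ^ 2) by field_simp]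
    ring
  rw [heq, integral_const_mul, sq_moment_exp _ hb]
  have h1 : π / (2 * Δ ^ 2)⁻¹ = (2 * π) * Δ ^ 2 := by field_simp
  have h2 : Real.sqrt ((2 * π) * Δ ^ 2) = Real.sqrt (2 * π) * Δ := by
    rw [Real.sqrt_mul (by positivity), Real.sqrt_sq hΔ.le]
  have hs : 0 < Real.sqrt (2 * π) := Real.sqrt_pos.2 (by positivity)
  rw [h1, h2]
  field_simp

lemma gaussianPDF_pos (Δ s : ℝ) (hΔ : 0 < Δ) : 0 < gaussianPDF Δ s := by
  unfold gaussianPDF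
  have := Real.pi_pos
  positivity

lemma gaussianPDF_hasDerivAt (Δ s : ℝ) (hΔ : 0 < Δ) :
    HasDerivAt (gaussianPDF Δ) (-(s / Δ ^ 2) * gaussianPDF Δ s) s := by
  have hu : HasDerivAt (fun s : ℝ => -(s ^ 2) / (2 * Δ ^ 2)) (-(2 * s) / (2 * Δ ^ 2)) s := by
    simpa using ((hasDerivAt_pow 2 s).neg).div_const (2 * Δ ^ 2)
  have h := (hu.exp).const_mul (1 / (Real.sqrt (2 * Real.pi) * Δ))
  refine h.congr_deriv ?_
  unfold gaussianPDF
  field_simp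

lemma shifted_hasDerivAt (Δ ν x g : ℝ) (hΔ : 0 < Δ) :
    HasDerivAt (fun g' : ℝ => gaussianPDF Δ (x - ν * g'))
      (ν * (x - ν * g) / Δ ^ 2 * gaussianPDF Δ (x - ν * g)) g := by
  have h1 : HasDerivAt (fun g' : ℝ => x - ν * g') (-ν) g := by
    simpa using ((hasDerivAt_id g).const_mul ν).const_sub x
  have h2 := (gaussianPDF_hasDerivAt Δ (x - ν * g) hΔ).comp g h1
  refine h2.congr_deriv ?_
  ring

lemma fisher_gaussian (Δ ν : ℝ) (hΔ : 0 < Δ) (g : ℝ) :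
    (∫ x, (deriv (fun g' => gaussianPDF Δ (x - ν * g')) g) ^ 2
      / gaussianPDF Δ (x - ν * g)) = ν ^ 2 / Δ ^ 2 := by
  have key := key_moment Δ hΔ
  have hpt : ∀ x : ℝ, (deriv (fun g' => gaussianPDF Δ (x - ν * g')) g) ^ 2
      / gaussianPDF Δ (x - ν * g)
      = ν ^ 2 / Δ ^ 4 * ((x - ν * g) ^ 2 * gaussianPDF Δ (x - ν * g)) := by
    intro x
    rw [(shifted_hasDerivAt Δ ν x g hΔ).deriv]
    have hp := (gaussianPDF_pos Δ (x - ν * g) hΔ).ne'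
    field_simp
  simp_rw [hpt]
  rw [integral_const_mul]
  have hsub : (∫ x, (x - ν * g) ^ 2 * gaussianPDF Δ (x - ν * g))
      = ∫ s, s ^ 2 * gaussianPDF Δ s :=
    integral_sub_right_eq_self (fun s => s ^ 2 * gaussianPDF Δ s) (ν * g)
  rw [hsub, key]
  field_simp

lemma inner_le_lam {n : ℕ}
    (A : EuclideanSpace ℂ (Fin n) →ₗ[ℂ] EuclideanSpace ℂ (Fin n))
    (hA : LinearMap.IsSymmetric A) (lam : ℝ)
    (hlam : IsGreatest {r : ℝ | ∃ μ ∈ spectrum ℂ A, ‖μ‖ = r} lam)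
    (i f : EuclideanSpace ℂ (Fin n)) (hi : ‖i‖ = 1) (hf : ‖f‖ = 1)
    (hfi : ⟪f, i⟫ ≠ 0) : ‖⟪f, A i⟫‖ ≤ lam := by
  have hrank : Module.finrank ℂ (EuclideanSpace ℂ (Fin n)) = n := finrank_euclideanSpace_fin
  set B := hA.eigenvectorBasis hrank with hB
  set μ := hA.eigenvalues hrank with hμ
  have hspec : ∀ k, ((μ k : ℂ)) ∈ spectrum ℂ A := by
    intro k
    have := hA.hasEigenvalue_eigenvalues hrank k
    exact (Module.End.hasEigenvalue_iff_mem_spectrum).1 this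
  have hbound : ∀ k, |μ k| ≤ lam := by
    intro k
    have := hlam.2 ⟨(μ k : ℂ), hspec k, rfl⟩
    simpa using this
  have hlam0 : 0 ≤ lam := by
    have hn : 0 < n := by
      by_contra h
      push_neg at h
      interval_cases n
      · have : i = 0 := Subsingleton.elim i 0
        simp [this] at hfi
    exact le_trans (abs_nonneg _) (hbound ⟨0, hn⟩)
  have hrepr : ∀ k, B.repr (A i) k = (μ k : ℂ) * B.repr i k := by
    intro k
    rw [B.repr_apply_apply, B.repr_apply_apply, ← hA (B k) i,
      hA.apply_eigenvectorBasis hrank k, inner_smul_left]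
    simp
    rfl
  have hAi : ‖A i‖ ≤ lam := by
    have h1 : ‖A i‖ ^ 2 = ∑ k, ‖B.repr (A i) k‖ ^ 2 := by
      rw [← B.repr.norm_map (A i), EuclideanSpace.norm_eq,
        Real.sq_sqrt (by positivity)]
    have h2 : ∑ k, ‖B.repr i k‖ ^ 2 = 1 := by
      have hn : ‖B.repr i‖ = 1 := by rw [B.repr.norm_map i]; exact hi
      rw [EuclideanSpace.norm_eq] at hn
      have hsq := Real.sq_sqrt (x := ∑ k, ‖B.repr i k‖ ^ 2)
        (Finset.sum_nonneg fun k _ => sq_nonneg _)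
      rw [hn, one_pow] at hsq
      exact hsq.symm
    have h3 : ‖A i‖ ^ 2 ≤ lam ^ 2 := by
      rw [h1]
      calc ∑ k, ‖B.repr (A i) k‖ ^ 2 = ∑ k, (μ k) ^ 2 * ‖B.repr i k‖ ^ 2 := by
            refine Finset.sum_congr rfl fun k _ => ?_
            rw [hrepr k, norm_mul, Complex.norm_real, mul_pow, Real.norm_eq_abs, sq_abs]
        _ ≤ ∑ k, lam ^ 2 * ‖B.repr i k‖ ^ 2 := by
            refine Finset.sum_le_sum fun k _ => ?_
            have := hbound k
            have h4 : (μ k) ^ 2 ≤ lam ^ 2 := by nlinarith [abs_nonneg (μ k), sq_abs (μ k)]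
            exact mul_le_mul_of_nonneg_right h4 (by positivity)
        _ = lam ^ 2 := by rw [← Finset.mul_sum, h2, mul_one]
    nlinarith [norm_nonneg (A i)]
  calc ‖⟪f, A i⟫‖ ≤ ‖f‖ * ‖A i‖ := norm_inner_le_norm f (A i)
    _ ≤ lam := by rw [hf, one_mul]; exact hAi

/-- Under the AAV approximation with a Gaussian meter of width `Δ`, the
postselection-corrected weak-value-amplification Fisher information satisfies
`q F_g[P_wva] = |⟨f|A|i⟩|²/Δ² ≤ λ*²/Δ² = F_g[P_std]`, where the WVA family is
shifted by `Re(A_w)·g` with `A_w = ⟨f|A|i⟩/⟨f|i⟩` real, `q = |⟨f|i⟩|²`, and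
the standard family is shifted by `λ*·g`. -/
theorem wva_no_advantage_gaussian {n : ℕ}
    (A : EuclideanSpace ℂ (Fin n) →ₗ[ℂ] EuclideanSpace ℂ (Fin n))
    (hA : LinearMap.IsSymmetric A) (lam Δ : ℝ) (hΔ : 0 < Δ)
    (hlam : IsGreatest {r : ℝ | ∃ μ ∈ spectrum ℂ A, ‖μ‖ = r} lam)
    (i f : EuclideanSpace ℂ (Fin n)) (hi : ‖i‖ = 1) (hf : ‖f‖ = 1)
    (hfi : ⟪f, i⟫ ≠ 0)
    (hreal : (⟪f, A i⟫ / ⟪f, i⟫).im = 0) :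
    ∀ g : ℝ,
      ‖⟪f, i⟫‖ ^ 2 *
        (∫ x, (deriv (fun g' =>
            gaussianPDF Δ (x - (⟪f, A i⟫ / ⟪f, i⟫).re * g')) g) ^ 2
          / gaussianPDF Δ (x - (⟪f, A i⟫ / ⟪f, i⟫).re * g))
        = ‖⟪f, A i⟫‖ ^ 2 / Δ ^ 2 ∧
      ‖⟪f, A i⟫‖ ^ 2 / Δ ^ 2 ≤ lam ^ 2 / Δ ^ 2 ∧
      lam ^ 2 / Δ ^ 2
        = ∫ x, (deriv (fun g' => gaussianPDF Δ (x - lam * g')) g) ^ 2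
            / gaussianPDF Δ (x - lam * g) := by
  intro g
  refine ⟨?_, ?_, (fisher_gaussian Δ lam hΔ g).symm⟩
  · rw [fisher_gaussian Δ _ hΔ g]
    have hA_w : ‖⟪f, A i⟫ / ⟪f, i⟫‖ ^ 2 = ((⟪f, A i⟫ / ⟪f, i⟫).re) ^ 2 := by
      rw [Complex.sq_norm, Complex.normSq_apply, hreal]
      ring
    have hnorm : ‖⟪f, A i⟫‖ ^ 2 = ((⟪f, A i⟫ / ⟪f, i⟫).re) ^ 2 * ‖⟪f, i⟫‖ ^ 2 := by
      conv_lhs => rw [← div_mul_cancel₀ ⟪f, A i⟫ hfi]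
      rw [norm_mul, mul_pow, hA_w]
    rw [hnorm]
    ring
  · have hle := inner_le_lam A hA lam hlam i f hi hf hfi
    have hsq : ‖⟪f, A i⟫‖ ^ 2 ≤ lam ^ 2 := by nlinarith [norm_nonneg ⟪f, A i⟫]
    have hΔ2 : (0 : ℝ) < Δ ^ 2 := by positivity
    exact (div_le_div_iff_of_pos_right hΔ2).2 hsq
end
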